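/- Let $\gamma$ be a convex (supermodular) capacity on an algebra $\mathcal{A}$, i.e. $\gamma(\emptyset)=0$, $\gamma(\Omega)=1$, $\gamma$ monotone, and $\gamma(A \cup B) + \gamma(A \cap B) \ge \gamma(A) + \gamma(B)$. Let $V(f) = \int u(f)\, d\gamma$ be the Choquet integral. If $\theta$ is a gamble whose support consists of pairwise comonotonic acts (i.e. $[u(f(\omega)) - u(f(\omega'))][u(g(\omega)) - u(g(\omega'))] \ge 0$ for all $f,g$ in the support and $\omega, \omega' \in \Omega$), and $\eta$ is any gamble with $\sum_f \theta(f) u(f(\omega)) \ge \sum_f \eta(f) u(f(\omega))$ for all $\omega$, then $\sum_f \theta(f) V(f) \ge \sum_f \eta(f) V(f)$. -/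

import Mathlib

open MeasureTheory

/-- An algebra of subsets of `Ω`. -/
structure SetAlgebra (Ω : Type*) where
  sets : Set (Set Ω)
  empty_mem : ∅ ∈ sets
  compl_mem : ∀ A ∈ sets, Aᶜ ∈ sets
  union_mem : ∀ A ∈ sets, ∀ B ∈ sets, A ∪ B ∈ sets

/-- A finitely additive probability on an algebra of sets. -/
structure FinAddProb {Ω : Type*} (𝒜 : SetAlgebra Ω) where
  toFun : Set Ω → ℝ
  nonneg : ∀ A, 0 ≤ toFun A
  empty : toFun ∅ = 0
  univ : toFun Set.univ = 1
  mono : ∀ A ∈ 𝒜.sets, ∀ B ∈ 𝒜.sets, A ⊆ B → toFun A ≤ toFun B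
  additive : ∀ A ∈ 𝒜.sets, ∀ B ∈ 𝒜.sets, Disjoint A B → toFun (A ∪ B) = toFun A + toFun B

/-- The (Choquet-type) integral of a function `h` with respect to a monotone set
function `m` with `m Ω = 1`: for finitely additive probabilities and bounded measurable
`h` this is the Dunford–Schwartz integral `∫ h dm`. -/
noncomputable def faInt {Ω : Type*} (m : Set Ω → ℝ) (h : Ω → ℝ) : ℝ :=
  (∫ t in Set.Ioi (0 : ℝ), m {ω | t < h ω}) +
    ∫ t in Set.Iio (0 : ℝ), (m {ω | t < h ω} - 1)

/-- `h` is measurable with respect to the algebra `𝒜`. -/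
def AMeasurable {Ω : Type*} (𝒜 : SetAlgebra Ω) (h : Ω → ℝ) : Prop :=
  ∀ t : ℝ, {ω | t < h ω} ∈ 𝒜.sets ∧ {ω | h ω < t} ∈ 𝒜.sets

/-- `h` is bounded. -/
def IsBdd {Ω : Type*} (h : Ω → ℝ) : Prop := ∃ c : ℝ, ∀ ω, |h ω| ≤ c

namespace SetAlgebra
variable {Ω : Type*} (𝒜 : SetAlgebra Ω)

lemma univ_mem : Set.univ ∈ 𝒜.sets := by
  simpa using 𝒜.compl_mem ∅ 𝒜.empty_mem

lemma inter_mem {A B : Set Ω} (hA : A ∈ 𝒜.sets) (hB : B ∈ 𝒜.sets) :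
    A ∩ B ∈ 𝒜.sets := by
  have := 𝒜.compl_mem _ (𝒜.union_mem _ (𝒜.compl_mem _ hA) _ (𝒜.compl_mem _ hB))
  simpa [Set.compl_union] using this

end SetAlgebra

section Lists
open scoped Classical
variable {Ω ι : Type*} (γ : Set Ω → ℝ) (A : ι → Set Ω)

/-- union of atoms along a list -/
def preU (l : List ι) : Set Ω := ⋃ r ∈ l, A r

@[simp] lemma preU_nil : preU A ([] : List ι) = ∅ := by simp [preU]

@[simp] lemma preU_cons (r : ι) (l : List ι) : preU A (r :: l) = A r ∪ preU A l := by
  simp [preU]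

lemma preU_congr {l₁ l₂ : List ι} (h : ∀ r, r ∈ l₁ ↔ r ∈ l₂) :
    preU A l₁ = preU A l₂ := by
  simp only [preU]; ext x; simp only [Set.mem_iUnion]; constructor
  · rintro ⟨r, hr, hx⟩; exact ⟨r, (h r).1 hr, hx⟩
  · rintro ⟨r, hr, hx⟩; exact ⟨r, (h r).2 hr, hx⟩

lemma preU_mem {𝒜 : SetAlgebra Ω} {l : List ι} (h : ∀ r ∈ l, A r ∈ 𝒜.sets) :
    preU A l ∈ 𝒜.sets := by
  induction l with
  | nil => simpa using 𝒜.empty_mem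
  | cons r l ih =>
      rw [preU_cons]
      exact 𝒜.union_mem _ (h r (by simp)) _ (ih fun r' hr' => h r' (by simp [hr']))

/-- "Choquet sum" along an ordered list of atoms, with accumulator `P`. -/
noncomputable def chS (v : ι → ℝ) : Set Ω → List ι → ℝ
  | _, [] => 0
  | P, r :: l => (γ (P ∪ A r) - γ P) * v r + chS v (P ∪ A r) l

@[simp] lemma chS_nil (v : ι → ℝ) (P : Set Ω) : chS γ A v P [] = 0 := rfl

@[simp] lemma chS_cons (v : ι → ℝ) (P : Set Ω) (r : ι) (l : List ι) :
    chS γ A v P (r :: l) = (γ (P ∪ A r) - γ P) * v r + chS γ A v (P ∪ A r) l := rfl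

/-- greedy weights along a list -/
noncomputable def gw : Set Ω → List ι → ι → ℝ
  | _, [], _ => 0
  | P, r' :: l, r => (if r = r' then γ (P ∪ A r') - γ P else 0) + gw (P ∪ A r') l r

@[simp] lemma gw_nil (P : Set Ω) (r : ι) : gw γ A P [] r = 0 := rfl

@[simp] lemma gw_cons (P : Set Ω) (r' r : ι) (l : List ι) :
    gw γ A P (r' :: l) r =
      (if r = r' then γ (P ∪ A r') - γ P else 0) + gw γ A (P ∪ A r') l r := rfl

lemma gw_of_not_mem {P : Set Ω} {l : List ι} {r : ι} (h : r ∉ l) : gw γ A P l r = 0 := by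
  induction l generalizing P with
  | nil => rfl
  | cons r' l ih =>
      have h1 : r ≠ r' := fun e => h (by simp [e])
      have h2 : r ∉ l := fun e => h (by simp [e])
      simp [h1, ih h2]

lemma gw_nonneg {𝒜 : SetAlgebra Ω}
    (hmono : ∀ A ∈ 𝒜.sets, ∀ B ∈ 𝒜.sets, A ⊆ B → γ A ≤ γ B)
    {P : Set Ω} {l : List ι} (hP : P ∈ 𝒜.sets) (hA : ∀ r ∈ l, A r ∈ 𝒜.sets) (r : ι) :
    0 ≤ gw γ A P l r := by
  induction l generalizing P with
  | nil => simp
  | cons r' l ih =>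
      have hP' : P ∪ A r' ∈ 𝒜.sets := 𝒜.union_mem _ hP _ (hA r' (by simp))
      have h1 : 0 ≤ gw γ A (P ∪ A r') l r := ih hP' (fun x hx => hA x (by simp [hx]))
      have h2 : γ P ≤ γ (P ∪ A r') := hmono _ hP _ hP' Set.subset_union_left
      rw [gw_cons]
      split <;> linarith

lemma chS_eq_sum {v : ι → ℝ} {P : Set Ω} {l : List ι} (hnd : l.Nodup) :
    chS γ A v P l = (l.map (fun r => gw γ A P l r * v r)).sum := by
  induction l generalizing P with
  | nil => simp
  | cons r l ih =>
      rcases List.nodup_cons.1 hnd with ⟨hr, hnd'⟩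
      rw [chS_cons, ih hnd', List.map_cons, List.sum_cons]
      have h1 : gw γ A P (r :: l) r * v r = (γ (P ∪ A r) - γ P) * v r := by
        simp [gw_of_not_mem γ A hr]
      have h2 : (l.map fun r' => gw γ A (P ∪ A r) l r' * v r') =
          (l.map fun r' => gw γ A P (r :: l) r' * v r') := by
        apply List.map_congr_left
        intro x hx
        have : x ≠ r := fun e => hr (e ▸ hx)
        simp [this]
      rw [h1, h2]

lemma chS_one (P : Set Ω) (l : List ι) :
    chS γ A (fun _ => 1) P l = γ (P ∪ preU A l) - γ P := by
  induction l generalizing P with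
  | nil => simp
  | cons r l ih =>
      rw [chS_cons, ih, preU_cons, ← Set.union_assoc]
      ring

lemma chS_smul_add (c : ℝ) (v w : ι → ℝ) (P : Set Ω) (l : List ι) :
    chS γ A (fun r => c * v r + w r) P l = c * chS γ A v P l + chS γ A w P l := by
  induction l generalizing P with
  | nil => simp
  | cons r l ih => rw [chS_cons, ih, chS_cons, chS_cons]; ring

lemma chS_mono {𝒜 : SetAlgebra Ω}
    (hmono : ∀ A ∈ 𝒜.sets, ∀ B ∈ 𝒜.sets, A ⊆ B → γ A ≤ γ B)
    {v w : ι → ℝ} {P : Set Ω} {l : List ι} (hP : P ∈ 𝒜.sets)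
    (hA : ∀ r ∈ l, A r ∈ 𝒜.sets) (hvw : ∀ r ∈ l, v r ≤ w r) :
    chS γ A v P l ≤ chS γ A w P l := by
  induction l generalizing P with
  | nil => simp
  | cons r l ih =>
      have hP' : P ∪ A r ∈ 𝒜.sets := 𝒜.union_mem _ hP _ (hA r (by simp))
      have h2 : γ P ≤ γ (P ∪ A r) := hmono _ hP _ hP' Set.subset_union_left
      have := ih hP' (fun x hx => hA x (by simp [hx])) (fun x hx => hvw x (by simp [hx]))
      rw [chS_cons, chS_cons]
      have := hvw r (by simp)
      nlinarith [this]

end Lists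

section ListsB
open scoped Classical
variable {Ω ι : Type*} (γ : Set Ω → ℝ) (A : ι → Set Ω) {𝒜 : SetAlgebra Ω}

lemma gw_total {P : Set Ω} {l : List ι} (hnd : l.Nodup) :
    (l.map (gw γ A P l)).sum = γ (P ∪ preU A l) - γ P := by
  have h := chS_eq_sum γ A (v := fun _ => (1:ℝ)) (P := P) hnd
  rw [chS_one] at h
  rw [h]
  congr 1
  apply List.map_congr_left
  intro x _; simp

lemma gw_core
    (hmono : ∀ A ∈ 𝒜.sets, ∀ B ∈ 𝒜.sets, A ⊆ B → γ A ≤ γ B)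
    (hconvex : ∀ A ∈ 𝒜.sets, ∀ B ∈ 𝒜.sets, γ A + γ B ≤ γ (A ∪ B) + γ (A ∩ B))
    {P : Set Ω} {l : List ι} (p : ι → Bool)
    (hP : P ∈ 𝒜.sets) (hA : ∀ r ∈ l, A r ∈ 𝒜.sets)
    (hnd : l.Nodup)
    (hdisj : l.Pairwise (fun a b => Disjoint (A a) (A b))) :
    γ (P ∪ preU A (l.filter p)) - γ P ≤ ((l.filter p).map (gw γ A P l)).sum := by
  induction l generalizing P with
  | nil => simp
  | cons r l ih =>
      rcases List.nodup_cons.1 hnd with ⟨hr, hnd'⟩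
      rcases List.pairwise_cons.1 hdisj with ⟨hdr, hdisj'⟩
      have hAr : A r ∈ 𝒜.sets := hA r (by simp)
      have hP1 : P ∪ A r ∈ 𝒜.sets := 𝒜.union_mem _ hP _ hAr
      have hA' : ∀ x ∈ l, A x ∈ 𝒜.sets := fun x hx => hA x (by simp [hx])
      have ih' := ih hP1 hA' hnd' hdisj'
      have hmapeq : ((l.filter p).map (gw γ A (P ∪ A r) l)) =
          ((l.filter p).map (gw γ A P (r :: l))) := by
        apply List.map_congr_left
        intro x hx
        have hxl : x ∈ l := List.mem_of_mem_filter hx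
        have hxr : x ≠ r := fun e => hr (e ▸ hxl)
        simp [hxr]
      by_cases hpr : p r
      · rw [List.filter_cons_of_pos hpr, preU_cons, List.map_cons, List.sum_cons, ← hmapeq]
        have hgwr : gw γ A P (r :: l) r = γ (P ∪ A r) - γ P := by
          simp [gw_of_not_mem γ A hr]
        rw [hgwr, ← Set.union_assoc]
        linarith
      · rw [List.filter_cons_of_neg (by simpa using hpr), ← hmapeq]
        -- convexity step
        set U : Set Ω := preU A (l.filter p) with hU
        have hUmem : U ∈ 𝒜.sets := preU_mem A (fun x hx => hA' x (List.mem_of_mem_filter hx))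
        have hX : P ∪ U ∈ 𝒜.sets := 𝒜.union_mem _ hP _ hUmem
        have hUAr : U ∩ A r = ∅ := by
          rw [hU, preU]
          ext x
          simp only [Set.mem_inter_iff, Set.mem_iUnion, Set.mem_empty_iff_false, iff_false,
            not_and]
          rintro ⟨y, hy, hxy⟩ hxr
          exact (hdr y (List.mem_of_mem_filter hy)).ne_of_mem hxr hxy rfl
        have hcap : (P ∪ U) ∩ (P ∪ A r) = P := by
          rw [← Set.union_inter_distrib_left, hUAr, Set.union_empty]
        have hcup : (P ∪ U) ∪ (P ∪ A r) = (P ∪ A r) ∪ U := by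
          ext x; simp [or_comm, or_assoc, or_left_comm]
        have hc := hconvex _ hX _ hP1
        rw [hcup, hcap] at hc
        linarith

lemma chS_abel {v : ι → ℝ} {P : Set Ω} {l : List ι} (q : ι → ℝ) (c M : ℝ)
    (hc : 0 ≤ c) (hM : ∀ r ∈ l, v r ≤ M)
    (hdesc : l.Pairwise fun a b => v b ≤ v a)
    (hq : ∀ r ∈ l, 0 ≤ q r)
    (H1 : ∀ n, γ (P ∪ preU A (l.take n)) - γ P ≤ c + ((l.take n).map q).sum)
    (H2 : γ (P ∪ preU A l) - γ P = c + (l.map q).sum) :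
    chS γ A v P l ≤ c * M + (l.map fun r => q r * v r).sum := by
  induction l generalizing P c M with
  | nil =>
      simp only [preU_nil, Set.union_empty, List.map_nil, List.sum_nil, sub_self,
        add_zero] at H2
      have : c = 0 := H2.symm
      simp [this]
  | cons r l ih =>
      rcases List.pairwise_cons.1 hdesc with ⟨hdr, hdesc'⟩
      set g : ℝ := γ (P ∪ A r) - γ P with hg
      have hgle : g ≤ c + q r := by
        have h1 := H1 1
        rw [show List.take 1 (r :: l) = [r] from rfl] at h1
        simp only [preU_cons, preU_nil, Set.union_empty, List.map_cons, List.map_nil,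
          List.sum_cons, List.sum_nil, add_zero] at h1
        rw [hg]; linarith
      set c' : ℝ := c + q r - g with hc'
      have hc'0 : 0 ≤ c' := by linarith
      have H1' : ∀ n, γ ((P ∪ A r) ∪ preU A (l.take n)) - γ (P ∪ A r)
          ≤ c' + ((l.take n).map q).sum := by
        intro n
        have := H1 (n + 1)
        rw [List.take_succ_cons, preU_cons, ← Set.union_assoc] at this
        simp only [List.map_cons, List.sum_cons] at this
        linarith
      have H2' : γ ((P ∪ A r) ∪ preU A l) - γ (P ∪ A r) = c' + (l.map q).sum := by
        have := H2
        rw [preU_cons, ← Set.union_assoc] at this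
        simp only [List.map_cons, List.sum_cons] at this
        linarith
      have ihh := ih c' (v r) hc'0 hdr hdesc'
        (fun x hx => hq x (by simp [hx])) H1' H2'
      rw [chS_cons, List.map_cons, List.sum_cons]
      have hvM : v r ≤ M := hM r (by simp)
      have hkey : c * v r ≤ c * M := mul_le_mul_of_nonneg_left hvM hc
      have e : g * v r + c' * v r = c * v r + q r * v r := by rw [hc']; ring
      rw [← hg]
      linarith [ihh, hkey, e]

lemma exists_sorted_list {α : Type*} (R : Finset α) (w : α → ℝ) :
    ∃ l : List α, l.Nodup ∧ (∀ x, x ∈ l ↔ x ∈ R) ∧ l.Pairwise (fun a b => w b ≤ w a) := by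
  induction R using Finset.strongInduction with
  | _ R ih =>
    rcases R.eq_empty_or_nonempty with h | h
    · exact ⟨[], by simp [h]⟩
    · obtain ⟨a, ha, hmax⟩ := R.exists_max_image w h
      obtain ⟨l, hnd, hmem, hsort⟩ := ih (R.erase a) (Finset.erase_ssubset ha)
      refine ⟨a :: l, ?_, ?_, ?_⟩
      · exact List.nodup_cons.2 ⟨fun hal => by simpa using ((hmem a).1 hal), hnd⟩
      · intro x
        simp only [List.mem_cons, hmem, Finset.mem_erase]
        constructor
        · rintro (rfl | ⟨_, hx⟩) <;> [exact ha; exact hx]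
        · intro hx
          by_cases hxa : x = a
          · exact Or.inl hxa
          · exact Or.inr ⟨hxa, hx⟩
      · exact List.pairwise_cons.2
          ⟨fun b hb => hmax b (Finset.mem_of_mem_erase ((hmem b).1 hb)), hsort⟩

end ListsB

section Analytic
open MeasureTheory
open scoped Classical
variable {Ω ι : Type*} {𝒜 : SetAlgebra Ω} {γ : Set Ω → ℝ}

lemma gamma_bounds (hγ0 : γ ∅ = 0) (hγ1 : γ Set.univ = 1)
    (hmono : ∀ A ∈ 𝒜.sets, ∀ B ∈ 𝒜.sets, A ⊆ B → γ A ≤ γ B)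
    {A : Set Ω} (hA : A ∈ 𝒜.sets) : 0 ≤ γ A ∧ γ A ≤ 1 := by
  constructor
  · rw [← hγ0]; exact hmono _ 𝒜.empty_mem _ hA (Set.empty_subset _)
  · rw [← hγ1]; exact hmono _ hA _ 𝒜.univ_mem (Set.subset_univ _)

lemma antitone_gamma_level
    (hmono : ∀ A ∈ 𝒜.sets, ∀ B ∈ 𝒜.sets, A ⊆ B → γ A ≤ γ B)
    {h : Ω → ℝ} (hm : AMeasurable 𝒜 h) :
    Antitone (fun t => γ {ω | t < h ω}) := by
  intro t t' htt'
  exact hmono _ (hm t').1 _ (hm t).1 (fun ω hω => lt_of_le_of_lt htt' hω)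

lemma integrableOn_Ioi (hγ0 : γ ∅ = 0) (hγ1 : γ Set.univ = 1)
    (hmono : ∀ A ∈ 𝒜.sets, ∀ B ∈ 𝒜.sets, A ⊆ B → γ A ≤ γ B)
    {h : Ω → ℝ} {c : ℝ} (hc : ∀ ω, |h ω| ≤ c) (hm : AMeasurable 𝒜 h) :
    IntegrableOn (fun t => γ {ω | t < h ω}) (Set.Ioi 0) := by
  have hmeas : Measurable (fun t => γ {ω | t < h ω}) :=
    (antitone_gamma_level hmono hm).measurable
  have hind : Integrable ((Set.Ioc (0:ℝ) c).indicator (fun _ => (1:ℝ)))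
      (volume.restrict (Set.Ioi 0)) := by
    rw [integrable_indicator_iff measurableSet_Ioc]
    exact integrableOn_const (lt_top_iff_ne_top.1 (by
      rw [Measure.restrict_apply measurableSet_Ioc]
      exact lt_of_le_of_lt (measure_mono Set.inter_subset_left) measure_Ioc_lt_top))
  refine hind.mono' hmeas.aestronglyMeasurable ?_
  refine (ae_restrict_iff' measurableSet_Ioi).2 (Filter.Eventually.of_forall ?_)
  intro t ht
  rcases le_or_gt t c with htc | htc
  · have := gamma_bounds hγ0 hγ1 hmono (hm t).1
    rw [Set.indicator_of_mem (Set.mem_Ioc.2 ⟨ht, htc⟩)]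
    rw [Real.norm_eq_abs, abs_le]
    exact ⟨by linarith [this.1], this.2⟩
  · have hempty : {ω | t < h ω} = ∅ := by
      ext ω; simp only [Set.mem_setOf_eq, Set.mem_empty_iff_false, iff_false, not_lt]
      linarith [abs_le.1 (hc ω) |>.2]
    rw [Set.indicator_of_notMem (by simp [Set.mem_Ioc]; intro _; linarith)]
    simp [hempty, hγ0]

lemma integrableOn_Iio (hγ0 : γ ∅ = 0) (hγ1 : γ Set.univ = 1)
    (hmono : ∀ A ∈ 𝒜.sets, ∀ B ∈ 𝒜.sets, A ⊆ B → γ A ≤ γ B)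
    {h : Ω → ℝ} {c : ℝ} (hc : ∀ ω, |h ω| ≤ c) (hm : AMeasurable 𝒜 h) :
    IntegrableOn (fun t => γ {ω | t < h ω} - 1) (Set.Iio 0) := by
  have hmeas : Measurable (fun t => γ {ω | t < h ω} - 1) :=
    ((antitone_gamma_level hmono hm).measurable).sub measurable_const
  have hind : Integrable ((Set.Ico (-c) (0:ℝ)).indicator (fun _ => (1:ℝ)))
      (volume.restrict (Set.Iio 0)) := by
    rw [integrable_indicator_iff measurableSet_Ico]
    exact integrableOn_const (lt_top_iff_ne_top.1 (by
      rw [Measure.restrict_apply measurableSet_Ico]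
      exact lt_of_le_of_lt (measure_mono Set.inter_subset_left) measure_Ico_lt_top))
  refine hind.mono' hmeas.aestronglyMeasurable ?_
  refine (ae_restrict_iff' measurableSet_Iio).2 (Filter.Eventually.of_forall ?_)
  intro t ht
  rcases le_or_gt (-c) t with htc | htc
  · have := gamma_bounds hγ0 hγ1 hmono (hm t).1
    rw [Set.indicator_of_mem (Set.mem_Ico.2 ⟨htc, ht⟩)]
    rw [Real.norm_eq_abs, abs_le]
    constructor <;> linarith [this.1, this.2]
  · have huniv : {ω | t < h ω} = Set.univ := by
      ext ω; simp only [Set.mem_setOf_eq, Set.mem_univ, iff_true]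
      linarith [abs_le.1 (hc ω) |>.1]
    rw [Set.indicator_of_notMem (by simp [Set.mem_Ico]; intro h'; linarith)]
    simp [huniv, hγ1]

lemma faInt_mono (hγ0 : γ ∅ = 0) (hγ1 : γ Set.univ = 1)
    (hmono : ∀ A ∈ 𝒜.sets, ∀ B ∈ 𝒜.sets, A ⊆ B → γ A ≤ γ B)
    {h k : Ω → ℝ} {c c' : ℝ} (hc : ∀ ω, |h ω| ≤ c) (hc' : ∀ ω, |k ω| ≤ c')
    (hmh : AMeasurable 𝒜 h) (hmk : AMeasurable 𝒜 k)
    (hhk : ∀ ω, h ω ≤ k ω) : faInt γ h ≤ faInt γ k := by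
  have hpt : ∀ t, γ {ω | t < h ω} ≤ γ {ω | t < k ω} := fun t =>
    hmono _ (hmh t).1 _ (hmk t).1 (fun ω hω => lt_of_lt_of_le hω (hhk ω))
  unfold faInt
  apply add_le_add
  · exact integral_mono (integrableOn_Ioi hγ0 hγ1 hmono hc hmh)
      (integrableOn_Ioi hγ0 hγ1 hmono hc' hmk) (fun t => hpt t)
  · exact integral_mono (integrableOn_Iio hγ0 hγ1 hmono hc hmh)
      (integrableOn_Iio hγ0 hγ1 hmono hc' hmk) (fun t => by dsimp; linarith [hpt t])

end Analytic

section Simple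
open MeasureTheory
open scoped Classical
variable {Ω ι : Type*} (γ : Set Ω → ℝ) (A : ι → Set Ω)

lemma chS_eq_zero {w : ι → ℝ} {l : List ι} (hw : ∀ r ∈ l, w r = 0) (P : Set Ω) :
    chS γ A w P l = 0 := by
  induction l generalizing P with
  | nil => simp
  | cons r l ih =>
      rw [chS_cons, hw r (by simp), ih (fun x hx => hw x (by simp [hx]))]
      ring

lemma gamma_level_eq {s : Ω → ℝ} {v : ι → ℝ} (t : ℝ) :
    ∀ (l : List ι) (P : Set Ω),
    l.Pairwise (fun a b => v b ≤ v a) →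
    (∀ r ∈ l, ∀ ω ∈ A r, s ω = v r) →
    (∀ ω, t < s ω ↔ (ω ∈ P ∨ ∃ r ∈ l, ω ∈ A r ∧ t < v r)) →
    γ {ω | t < s ω} = γ P + chS γ A (fun r => if t < v r then 1 else 0) P l := by
  intro l
  induction l with
  | nil =>
      intro P _ _ hset
      have : {ω | t < s ω} = P := by
        ext ω; simp only [Set.mem_setOf_eq, hset ω]; simp
      rw [this, chS_nil]; ring
  | cons r l ih =>
      intro P hdesc hs hset
      rcases List.pairwise_cons.1 hdesc with ⟨hdr, hdesc'⟩
      by_cases htv : t < v r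
      · have hset' : ∀ ω, t < s ω ↔ (ω ∈ P ∪ A r ∨ ∃ r' ∈ l, ω ∈ A r' ∧ t < v r') := by
          intro ω
          rw [hset ω]
          constructor
          · rintro (hP | ⟨r', hr', hω, htv'⟩)
            · exact Or.inl (Or.inl hP)
            · rcases List.mem_cons.1 hr' with rfl | hr'l
              · exact Or.inl (Or.inr hω)
              · exact Or.inr ⟨r', hr'l, hω, htv'⟩
          · rintro ((hP | hω) | ⟨r', hr', hω, htv'⟩)
            · exact Or.inl hP
            · exact Or.inr ⟨r, by simp, hω, htv⟩
            · exact Or.inr ⟨r', by simp [hr'], hω, htv'⟩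
        rw [ih (P ∪ A r) hdesc' (fun x hx => hs x (by simp [hx])) hset']
        rw [chS_cons, if_pos htv]
        ring
      · have hzero : ∀ r' ∈ l, ¬ t < v r' := by
          intro r' hr' hlt
          exact htv (lt_of_lt_of_le hlt (hdr r' hr'))
        have : {ω | t < s ω} = P := by
          ext ω
          simp only [Set.mem_setOf_eq, hset ω]
          constructor
          · rintro (hP | ⟨r', hr', hω, htv'⟩)
            · exact hP
            · rcases List.mem_cons.1 hr' with rfl | hr'l
              · exact absurd htv' htv
              · exact absurd htv' (hzero r' hr'l)
          · exact fun hP => Or.inl hP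
        rw [this, chS_cons, if_neg htv,
          chS_eq_zero γ A (fun x hx => by rw [if_neg (hzero x hx)]) (P ∪ A r)]
        ring

lemma faInt_simple (hγ0 : γ ∅ = 0) (hγ1 : γ Set.univ = 1)
    {s : Ω → ℝ} {v : ι → ℝ} {l : List ι}
    (hnd : l.Nodup)
    (hdesc : l.Pairwise fun a b => v b ≤ v a)
    (hs : ∀ r ∈ l, ∀ ω ∈ A r, s ω = v r)
    (hcover : ∀ ω, ∃ r ∈ l, ω ∈ A r) :
    faInt γ s = chS γ A v ∅ l := by
  have hqtot : (l.map (gw γ A ∅ l)).sum = 1 := by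
    rw [gw_total γ A hnd, hγ0]
    have hu : preU A l = Set.univ := by
      rw [preU]; ext ω
      simp only [Set.mem_iUnion, Set.mem_univ, iff_true]
      simpa using hcover ω
    rw [hu, Set.empty_union, hγ1]
    ring
  have hqtotF : ∑ r ∈ l.toFinset, gw γ A ∅ l r = 1 :=
    (List.sum_toFinset _ hnd).trans hqtot
  have hset : ∀ t ω, t < s ω ↔ (ω ∈ (∅ : Set Ω) ∨ ∃ r ∈ l, ω ∈ A r ∧ t < v r) := by
    intro t ω
    constructor
    · intro ht
      obtain ⟨r, hr, hω⟩ := hcover ω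
      exact Or.inr ⟨r, hr, hω, by rwa [← hs r hr ω hω]⟩
    · rintro (h | ⟨r, hr, hω, htv⟩)
      · exact absurd h (Set.notMem_empty ω)
      · rwa [hs r hr ω hω]
  have hlev : ∀ t, γ {ω | t < s ω} =
      ∑ r ∈ l.toFinset, gw γ A ∅ l r * (if t < v r then 1 else 0) := by
    intro t
    rw [gamma_level_eq γ A t l ∅ hdesc hs (hset t), hγ0,
      chS_eq_sum γ A hnd, zero_add, ← List.sum_toFinset _ hnd]
  -- first integral
  have hI1 : (∫ t in Set.Ioi (0:ℝ), γ {ω | t < s ω}) =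
      ∑ r ∈ l.toFinset, gw γ A ∅ l r * max (v r) 0 := by
    have hfun : (fun t => γ {ω | t < s ω}) = fun t =>
        ∑ r ∈ l.toFinset, gw γ A ∅ l r * (Set.Iio (v r)).indicator (fun _ => (1:ℝ)) t := by
      funext t
      rw [hlev t]
      refine Finset.sum_congr rfl fun r _ => ?_
      by_cases h : t < v r <;> simp [Set.indicator_apply, Set.mem_Iio, h]
    rw [hfun]
    rw [integral_finset_sum]
    · refine Finset.sum_congr rfl fun r _ => ?_
      rw [integral_const_mul]
      congr 1
      rw [integral_indicator measurableSet_Iio, Measure.restrict_restrict measurableSet_Iio,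
        Set.Iio_inter_Ioi, setIntegral_const, Real.volume_real_Ioo, smul_eq_mul, mul_one]
      simp
    · intro r _
      apply Integrable.const_mul
      rw [integrable_indicator_iff measurableSet_Iio]
      exact integrableOn_const (lt_top_iff_ne_top.1 (by
        rw [Measure.restrict_apply measurableSet_Iio, Set.Iio_inter_Ioi]
        exact measure_Ioo_lt_top))
  -- second integral
  have hI2 : (∫ t in Set.Iio (0:ℝ), (γ {ω | t < s ω} - 1)) =
      ∑ r ∈ l.toFinset, (- gw γ A ∅ l r) * max (- v r) 0 := by
    have hfun : (fun t => γ {ω | t < s ω} - 1) = fun t =>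
        ∑ r ∈ l.toFinset, (- gw γ A ∅ l r) * (Set.Ici (v r)).indicator (fun _ => (1:ℝ)) t := by
      funext t
      have hsum : ∑ r ∈ l.toFinset, (- gw γ A ∅ l r) * (Set.Ici (v r)).indicator
            (fun _ => (1:ℝ)) t
          = (∑ r ∈ l.toFinset, gw γ A ∅ l r * (if t < v r then 1 else 0))
            - ∑ r ∈ l.toFinset, gw γ A ∅ l r := by
        rw [← Finset.sum_sub_distrib]
        refine Finset.sum_congr rfl fun r _ => ?_
        by_cases h : t < v r
        · simp [Set.indicator_apply, Set.mem_Ici, h, not_le.2 h]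
        · simp [Set.indicator_apply, Set.mem_Ici, h, not_lt.1 h]
      rw [hsum, hqtotF, hlev t]
    rw [hfun]
    rw [integral_finset_sum]
    · refine Finset.sum_congr rfl fun r _ => ?_
      rw [integral_const_mul]
      congr 1
      rw [integral_indicator measurableSet_Ici, Measure.restrict_restrict measurableSet_Ici,
        Set.Ici_inter_Iio, setIntegral_const, Real.volume_real_Ico, smul_eq_mul, mul_one]
      simp
    · intro r _
      apply Integrable.const_mul
      rw [integrable_indicator_iff measurableSet_Ici]
      exact integrableOn_const (lt_top_iff_ne_top.1 (by
        rw [Measure.restrict_apply measurableSet_Ici, Set.Ici_inter_Iio]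
        exact measure_Ico_lt_top))
  rw [faInt, hI1, hI2, ← Finset.sum_add_distrib]
  rw [chS_eq_sum γ A hnd, ← List.sum_toFinset _ hnd]
  refine Finset.sum_congr rfl fun r _ => ?_
  have hmm : max (v r) 0 - max (- v r) 0 = v r := max_zero_sub_max_neg_zero_eq_self (v r)
  calc gw γ A ∅ l r * (v r ⊔ 0) + -gw γ A ∅ l r * (-v r ⊔ 0)
      = gw γ A ∅ l r * ((v r ⊔ 0) - (-v r ⊔ 0)) := by ring
    _ = gw γ A ∅ l r * v r := by rw [hmm]

end Simple

section Disc
variable {Ω : Type*} {𝒜 : SetAlgebra Ω}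

noncomputable def disc (ε : ℝ) (h : Ω → ℝ) : Ω → ℝ := fun ω => ε * ⌈h ω / ε⌉

lemma disc_ge {ε : ℝ} (hε : 0 < ε) (h : Ω → ℝ) (ω : Ω) : h ω ≤ disc ε h ω := by
  have h1 : h ω / ε ≤ (⌈h ω / ε⌉ : ℝ) := Int.le_ceil _
  have := mul_le_mul_of_nonneg_left h1 hε.le
  rwa [mul_div_cancel₀ _ hε.ne'] at this

lemma disc_le {ε : ℝ} (hε : 0 < ε) (h : Ω → ℝ) (ω : Ω) : disc ε h ω ≤ h ω + ε := by
  have h1 : (⌈h ω / ε⌉ : ℝ) < h ω / ε + 1 := Int.ceil_lt_add_one _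
  have h2 := mul_le_mul_of_nonneg_left h1.le hε.le
  calc disc ε h ω ≤ ε * (h ω / ε + 1) := h2
    _ = h ω + ε := by field_simp

lemma disc_mono {ε : ℝ} (hε : 0 < ε) (h : Ω → ℝ) {ω ω' : Ω} (hle : h ω ≤ h ω') :
    disc ε h ω ≤ disc ε h ω' := by
  have h1 : h ω / ε ≤ h ω' / ε := by gcongr
  have h2 : (⌈h ω / ε⌉ : ℤ) ≤ ⌈h ω' / ε⌉ := Int.ceil_le_ceil h1
  exact mul_le_mul_of_nonneg_left (by exact_mod_cast h2) hε.le

lemma disc_bdd {ε c : ℝ} (hε : 0 < ε) {h : Ω → ℝ} (hc : ∀ ω, |h ω| ≤ c) (ω : Ω) :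
    |disc ε h ω| ≤ c + ε := by
  rcases abs_le.1 (hc ω) with ⟨h1, h2⟩
  have hg := disc_ge hε h ω
  have hl := disc_le hε h ω
  rw [abs_le]; constructor <;> linarith

lemma disc_lt_iff {ε : ℝ} (hε : 0 < ε) (h : Ω → ℝ) (t : ℝ) (ω : Ω) :
    t < disc ε h ω ↔ ε * ⌊t / ε⌋ < h ω := by
  rw [disc]
  rw [show (t < ε * ⌈h ω / ε⌉ ↔ t / ε < (⌈h ω / ε⌉ : ℝ)) by
    rw [div_lt_iff₀ hε, mul_comm]]
  rw [← Int.floor_lt, Int.lt_ceil, ← lt_div_iff₀' hε]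

lemma lt_disc_iff {ε : ℝ} (hε : 0 < ε) (h : Ω → ℝ) (t : ℝ) (ω : Ω) :
    disc ε h ω < t ↔ h ω ≤ ε * (⌈t / ε⌉ - 1) := by
  rw [disc]
  rw [show (ε * ⌈h ω / ε⌉ < t ↔ (⌈h ω / ε⌉ : ℝ) < t / ε) by
    rw [lt_div_iff₀ hε, mul_comm]]
  rw [← Int.lt_ceil, show (⌈h ω / ε⌉ < ⌈t / ε⌉ ↔ ⌈h ω / ε⌉ ≤ ⌈t / ε⌉ - 1) from
    Int.lt_iff_add_one_le.trans (by omega), Int.ceil_le, ← div_le_iff₀' hε]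
  push_cast
  ring_nf

lemma disc_ameas {ε : ℝ} (hε : 0 < ε) {h : Ω → ℝ} (hm : AMeasurable 𝒜 h) :
    AMeasurable 𝒜 (disc ε h) := by
  intro t
  constructor
  · have he : {ω | t < disc ε h ω} = {ω | ε * ⌊t / ε⌋ < h ω} := by
      ext ω; exact disc_lt_iff hε h t ω
    rw [he]; exact (hm _).1
  · have he : {ω | disc ε h ω < t} = {ω | ε * (⌈t / ε⌉ - 1) < h ω}ᶜ := by
      ext ω
      simp only [Set.mem_setOf_eq, Set.mem_compl_iff, not_lt]
      exact lt_disc_iff hε h t ω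
    rw [he]; exact 𝒜.compl_mem _ (hm _).1

lemma disc_finite_range {ε c : ℝ} (hε : 0 < ε) {h : Ω → ℝ} (hc : ∀ ω, |h ω| ≤ c) :
    (Set.range (disc ε h)).Finite := by
  apply Set.Finite.subset ((Set.finite_Icc (⌈(-c) / ε⌉) ⌈c / ε⌉).image (fun n : ℤ => ε * n))
  rintro x ⟨ω, rfl⟩
  refine ⟨⌈h ω / ε⌉, ?_, rfl⟩
  rcases abs_le.1 (hc ω) with ⟨h1, h2⟩
  simp only [Set.mem_Icc]
  constructor <;> apply Int.ceil_le_ceil <;> gcongr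

end Disc

section Inter
variable {Ω : Type*} (𝒜 : SetAlgebra Ω)

lemma SetAlgebra.biInter_mem {ι : Type*} (s : Finset ι) (A : ι → Set Ω)
    (h : ∀ i ∈ s, A i ∈ 𝒜.sets) : (⋂ i ∈ s, A i) ∈ 𝒜.sets := by
  classical
  induction s using Finset.induction_on with
  | empty => simpa using 𝒜.univ_mem
  | insert _ _ hni ih =>
      rw [Finset.set_biInter_insert]
      exact 𝒜.inter_mem (h _ (Finset.mem_insert_self _ _))
        (ih fun i hi => h i (Finset.mem_insert_of_mem hi))

lemma SetAlgebra.iInter_mem {ι : Type*} [Fintype ι] (A : ι → Set Ω)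
    (h : ∀ i, A i ∈ 𝒜.sets) : (⋂ i, A i) ∈ 𝒜.sets := by
  have : (⋂ i, A i) = ⋂ i ∈ (Finset.univ : Finset ι), A i := by simp
  rw [this]
  exact 𝒜.biInter_mem Finset.univ A (fun i _ => h i)

end Inter

section MoreLemmas
open scoped Classical
variable {Ω ι : Type*} (γ : Set Ω → ℝ) (A : ι → Set Ω)

lemma chS_finset_sum {κ : Type*} (T : Finset κ) (coef : κ → ℝ) (vv : κ → ι → ℝ)
    (P : Set Ω) (l : List ι) :
    chS γ A (fun r => ∑ j ∈ T, coef j * vv j r) P l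
      = ∑ j ∈ T, coef j * chS γ A (vv j) P l := by
  induction T using Finset.induction_on with
  | empty =>
      simp only [Finset.sum_empty]
      exact chS_eq_zero γ A (fun _ _ => rfl) P
  | @insert a s hni ih =>
      have h1 : (fun r => ∑ j ∈ insert a s, coef j * vv j r)
          = fun r => coef a * vv a r + ∑ j ∈ s, coef j * vv j r := by
        funext r; rw [Finset.sum_insert hni]
      rw [h1, chS_smul_add, ih, Finset.sum_insert hni]

lemma AMeasurable_sub_const {𝒜 : SetAlgebra Ω} {h : Ω → ℝ}
    (hm : AMeasurable 𝒜 h) (c : ℝ) : AMeasurable 𝒜 (fun ω => h ω - c) := by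
  intro t
  constructor
  · have : {ω | t < h ω - c} = {ω | t + c < h ω} := by
      ext ω; simp only [Set.mem_setOf_eq]; constructor <;> intro <;> linarith
    rw [this]; exact (hm (t + c)).1
  · have : {ω | h ω - c < t} = {ω | h ω < t + c} := by
      ext ω; simp only [Set.mem_setOf_eq]; constructor <;> intro <;> linarith
    rw [this]; exact (hm (t + c)).2

end MoreLemmas

open scoped Classical in

/-- Choquet expected utility with respect to a convex (supermodular)
capacity is `Θ₁`-coherent: if the support of the gamble `θ` consists of pairwise
comonotonic acts and `θ` dominates `η` state by state in conditional utility, then the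
value of `θ` is at least the value of `η`. -/
theorem ceu_implies_theta1_coherence {Ω X : Type*} (𝒜 : SetAlgebra Ω)
    (γ : Set Ω → ℝ) (hγ0 : γ ∅ = 0) (hγ1 : γ Set.univ = 1)
    (hmono : ∀ A ∈ 𝒜.sets, ∀ B ∈ 𝒜.sets, A ⊆ B → γ A ≤ γ B)
    (hconvex : ∀ A ∈ 𝒜.sets, ∀ B ∈ 𝒜.sets, γ A + γ B ≤ γ (A ∪ B) + γ (A ∩ B))
    (F : Set (Ω → X)) (V : (Ω → X) → ℝ) (u : X → ℝ)
    (hbm : ∀ f ∈ F, IsBdd (fun ω => u (f ω)) ∧ AMeasurable 𝒜 (fun ω => u (f ω)))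
    (hrep : ∀ f ∈ F, V f = faInt γ (fun ω => u (f ω))) :
    ∀ θ η : (Ω → X) →₀ ℝ, ↑θ.support ⊆ F → ↑η.support ⊆ F →
      (∀ f, 0 ≤ θ f) → (∀ f, 0 ≤ η f) →
      θ.sum (fun _ v => v) ≤ 1 → η.sum (fun _ v => v) ≤ 1 →
      (∀ f ∈ θ.support, ∀ g ∈ θ.support, ∀ ω ω' : Ω,
        0 ≤ (u (f ω) - u (f ω')) * (u (g ω) - u (g ω'))) →
      (∀ ω : Ω, η.sum (fun f v => v * u (f ω)) ≤ θ.sum (fun f v => v * u (f ω))) →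
      η.sum (fun f v => v * V f) ≤ θ.sum (fun f v => v * V f) := by
  intro θ η hθF hηF hθ0 hη0 hθm hηm hcom hdom
  classical
  rcases isEmpty_or_nonempty Ω with hΩ | hΩ
  · exfalso
    rw [Set.univ_eq_empty_iff.2 hΩ, hγ0] at hγ1
    linarith
  set S : Finset (Ω → X) := θ.support ∪ η.support with hSdef
  have hθS : θ.support ⊆ S := Finset.subset_union_left
  have hηS : η.support ⊆ S := Finset.subset_union_right
  have hSF : ∀ f ∈ S, f ∈ F := by
    intro f hf
    rcases Finset.mem_union.1 hf with h | h
    · exact hθF h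
    · exact hηF h
  rw [Finsupp.sum_of_support_subset θ hθS (fun f w => w * V f) (fun f _ => zero_mul _),
      Finsupp.sum_of_support_subset η hηS (fun f w => w * V f) (fun f _ => zero_mul _)]
  have hθm' : ∑ f ∈ S, θ f ≤ 1 := by
    rw [← Finsupp.sum_of_support_subset θ hθS (fun _ w => w) (fun f _ => rfl)]
    exact hθm
  have hηm' : ∑ f ∈ S, η f ≤ 1 := by
    rw [← Finsupp.sum_of_support_subset η hηS (fun _ w => w) (fun f _ => rfl)]
    exact hηm
  have hdom' : ∀ ω, ∑ f ∈ S, η f * u (f ω) ≤ ∑ f ∈ S, θ f * u (f ω) := by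
    intro ω
    rw [← Finsupp.sum_of_support_subset θ hθS (fun f w => w * u (f ω)) (fun f _ => zero_mul _),
        ← Finsupp.sum_of_support_subset η hηS (fun f w => w * u (f ω)) (fun f _ => zero_mul _)]
    exact hdom ω
  have hVeq : ∀ (w : (Ω → X) → ℝ),
      ∑ f ∈ S, w f * V f = ∑ f ∈ S, w f * faInt γ (fun ω => u (f ω)) :=
    fun w => Finset.sum_congr rfl fun f hf => by rw [hrep f (hSF f hf)]
  rw [hVeq (fun f => θ f), hVeq (fun f => η f)]
  -- bounds and measurability
  have hbd : ∀ f : {x // x ∈ S}, ∃ c, ∀ ω, |u (f.1 ω)| ≤ c :=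
    fun f => (hbm f.1 (hSF f.1 f.2)).1
  choose cB hcB using hbd
  have hmeasS : ∀ f : {x // x ∈ S}, AMeasurable 𝒜 (fun ω => u (f.1 ω)) :=
    fun f => (hbm f.1 (hSF f.1 f.2)).2
  apply le_of_forall_pos_le_add
  intro δ hδ
  have hε : (0:ℝ) < δ / 2 := by linarith
  set ε : ℝ := δ / 2 with hεdef
  -- discretization
  set sf : {x // x ∈ S} → Ω → ℝ := fun f => disc ε (fun ω => u (f.1 ω)) with hsf
  set Φ : Ω → ({x // x ∈ S} → ℝ) := fun ω f => sf f ω with hΦ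
  have hfin : (Set.range Φ).Finite := by
    have hsub : Set.range Φ ⊆ Set.univ.pi (fun f => Set.range (sf f)) := by
      rintro x ⟨ω, rfl⟩ f _
      exact ⟨ω, rfl⟩
    refine (Set.Finite.pi (fun f => ?_)).subset hsub
    have : sf f = disc ε (fun ω => u (f.1 ω)) := by rw [hsf]
    rw [this]
    exact disc_finite_range hε (hcB f)
  set R : Finset ({x // x ∈ S} → ℝ) := hfin.toFinset with hR
  set A : ({x // x ∈ S} → ℝ) → Set Ω := fun r => Φ ⁻¹' {r} with hA
  set v : {x // x ∈ S} → ({x // x ∈ S} → ℝ) → ℝ := fun f r => r f with hv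
  have hΦap : ∀ (ω : Ω) (f : {x // x ∈ S}), Φ ω f = sf f ω := by
    intro ω f; rw [hΦ]
  have hvap : ∀ (f : {x // x ∈ S}) (r), v f r = r f := by
    intro f r; rw [hv]
  have hsfm : ∀ f : {x // x ∈ S}, AMeasurable 𝒜 (sf f) := by
    intro f; simp only [hsf]; exact disc_ameas hε (hmeasS f)
  have hsfb : ∀ f : {x // x ∈ S}, ∀ ω, |sf f ω| ≤ cB f + ε := by
    intro f; simp only [hsf]; exact disc_bdd hε (hcB f)
  have hsfge : ∀ (f : {x // x ∈ S}) ω, u (f.1 ω) ≤ sf f ω := by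
    intro f; simp only [hsf]; exact disc_ge hε _
  have hsfle : ∀ (f : {x // x ∈ S}) ω, sf f ω ≤ u (f.1 ω) + ε := by
    intro f; simp only [hsf]; exact disc_le hε _
  have hsfmono : ∀ (f : {x // x ∈ S}) ω ω', u (f.1 ω) ≤ u (f.1 ω') → sf f ω ≤ sf f ω' := by
    intro f; simp only [hsf]; exact fun ω ω' h => disc_mono hε _ h
  have hAmem : ∀ r, A r ∈ 𝒜.sets := by
    intro r
    have he : A r = ⋂ f : {x // x ∈ S}, ({ω | sf f ω < r f} ∪ {ω | r f < sf f ω})ᶜ := by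
      ext ω
      simp only [hA, Set.mem_preimage, Set.mem_singleton_iff, funext_iff, hΦap, Set.mem_iInter,
        Set.mem_compl_iff, Set.mem_union, Set.mem_setOf_eq, not_or, not_lt]
      constructor
      · intro h f; rw [h f]; exact ⟨le_rfl, le_rfl⟩
      · intro h f; exact le_antisymm (h f).2 (h f).1
    rw [he]
    exact 𝒜.iInter_mem _ fun f => 𝒜.compl_mem _
      (𝒜.union_mem _ ((hsfm f) (r f)).2 _ ((hsfm f) (r f)).1)
  have hΦmem : ∀ ω, Φ ω ∈ R := fun ω => hfin.mem_toFinset.2 ⟨ω, rfl⟩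
  have hatom : ∀ ω r, ω ∈ A r ↔ Φ ω = r := fun ω r => by
    simp [hA]
  have hvatom : ∀ (f : {x // x ∈ S}) (r) (ω), ω ∈ A r → sf f ω = v f r := by
    intro f r ω h
    rw [hvap, ← (hatom ω r).1 h, hΦap]
  -- sorting by the θ-weighted key
  set k : ({x // x ∈ S} → ℝ) → ℝ := fun r => ∑ f ∈ S.attach, θ f.1 * r f with hk
  obtain ⟨σl, hndσ, hmemσ, hdescσ⟩ := exists_sorted_list R k
  have hcover : ∀ ω, ∃ r ∈ σl, ω ∈ A r :=
    fun ω => ⟨Φ ω, (hmemσ _).2 (hΦmem ω), (hatom _ _).2 rfl⟩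
  have hdisjσ : σl.Pairwise (fun a b => Disjoint (A a) (A b)) := by
    refine hndσ.imp ?_
    intro a b hne
    refine Set.disjoint_left.2 fun ω hωa hωb => hne ?_
    rw [← (hatom ω a).1 hωa, ← (hatom ω b).1 hωb]
  have hAσ : ∀ r ∈ σl, A r ∈ 𝒜.sets := fun r _ => hAmem r
  have hpreσ : preU A σl = Set.univ := by
    ext ω
    simp only [preU, Set.mem_iUnion, Set.mem_univ, iff_true]
    obtain ⟨r, hr, hωr⟩ := hcover ω
    exact ⟨r, hr, hωr⟩
  have hchone : chS γ A (fun _ => (1:ℝ)) ∅ σl = 1 := by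
    rw [chS_one, Set.empty_union, hpreσ, hγ1, hγ0]; ring
  -- descending property for θ-support coordinates
  have hcomS : ∀ f g : {x // x ∈ S}, f.1 ∈ θ.support → g.1 ∈ θ.support →
      ∀ ω ω', sf f ω < sf f ω' → sf g ω ≤ sf g ω' := by
    intro f g hf hg ω ω' hlt
    have h1 : u (f.1 ω) < u (f.1 ω') := by
      by_contra hcon
      push_neg at hcon
      exact absurd (hsfmono f ω' ω hcon) (not_le.2 hlt)
    have h2 := hcom f.1 hf g.1 hg ω ω'
    have h3 : u (g.1 ω) ≤ u (g.1 ω') := by nlinarith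
    exact hsfmono g ω ω' h3
  have hdescf : ∀ f : {x // x ∈ S}, f.1 ∈ θ.support →
      σl.Pairwise (fun a b => v f b ≤ v f a) := by
    intro f hf
    refine hdescσ.imp_of_mem ?_
    intro a b ha hb hkab
    by_contra hcon
    push_neg at hcon
    obtain ⟨ω, hωa⟩ : ∃ ω, Φ ω = a := hfin.mem_toFinset.1 ((hmemσ a).1 ha)
    obtain ⟨ω', hωb⟩ : ∃ ω', Φ ω' = b := hfin.mem_toFinset.1 ((hmemσ b).1 hb)
    have hva : ∀ g : {x // x ∈ S}, sf g ω = a g :=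
      fun g => (hΦap ω g).symm.trans (congrFun hωa g)
    have hvb : ∀ g : {x // x ∈ S}, sf g ω' = b g :=
      fun g => (hΦap ω' g).symm.trans (congrFun hωb g)
    have hflt : sf f ω < sf f ω' := by
      rw [hva, hvb]
      rw [hvap, hvap] at hcon
      exact hcon
    have hall : ∀ g ∈ S.attach, θ g.1 * a g ≤ θ g.1 * b g := by
      intro g _
      by_cases hg : g.1 ∈ θ.support
      · have := hcomS f g hf hg ω ω' hflt
        rw [hva g, hvb g] at this
        exact mul_le_mul_of_nonneg_left this (hθ0 g.1)
      · rw [Finsupp.notMem_support_iff.1 hg]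
        simp
    have hθf : 0 < θ f.1 :=
      lt_of_le_of_ne (hθ0 f.1) (Ne.symm (Finsupp.mem_support_iff.1 hf))
    have hstrict : θ f.1 * a f < θ f.1 * b f :=
      mul_lt_mul_of_pos_left hcon hθf
    have : k a < k b := Finset.sum_lt_sum hall ⟨f, Finset.mem_attach _ _, hstrict⟩
    rw [hk] at this
    simp only [hk] at hkab
    linarith
  -- SIMPLE applications
  have hsimθ : ∀ f : {x // x ∈ S}, f.1 ∈ θ.support →
      faInt γ (sf f) = chS γ A (v f) ∅ σl := fun f hf =>
    faInt_simple γ A hγ0 hγ1 hndσ (hdescf f hf) (fun r _ ω hω => hvatom f r ω hω) hcover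
  have hsimθ' : ∀ f : {x // x ∈ S}, f.1 ∈ θ.support →
      faInt γ (fun ω => sf f ω - ε) = chS γ A (fun r => v f r - ε) ∅ σl := by
    intro f hf
    refine faInt_simple γ A hγ0 hγ1 hndσ ((hdescf f hf).imp ?_)
      (fun r _ ω hω => by rw [hvatom f r ω hω]) hcover
    intro a b h
    linarith
  have hchshift : ∀ f : {x // x ∈ S},
      chS γ A (fun r => v f r - ε) ∅ σl = chS γ A (v f) ∅ σl - ε := by
    intro f
    have h1 : (fun r => v f r - ε) = (fun r => (-ε) * (fun _ => (1:ℝ)) r + v f r) := by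
      funext r; ring
    rw [h1, chS_smul_add, hchone]
    ring
  have hboundv : ∀ f : {x // x ∈ S}, ∀ r ∈ R, v f r ≤ cB f + ε := by
    intro f r hr
    obtain ⟨ω, rfl⟩ := hfin.mem_toFinset.1 hr
    have e : v f (Φ ω) = sf f ω := (hvap f (Φ ω)).trans (hΦap ω f)
    rw [e]
    exact le_trans (le_abs_self _) (hsfb f ω)
  -- the core/Abel estimate: discretized Choquet value is at most the σl-weighted sum
  have hsimη : ∀ f : {x // x ∈ S}, faInt γ (sf f) ≤ chS γ A (v f) ∅ σl := by
    intro f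
    obtain ⟨τl, hndτ, hmemτ, hdescτ⟩ := exists_sorted_list R (v f)
    have hpermστ : σl.Perm τl :=
      (List.perm_ext_iff_of_nodup hndσ hndτ).2 (fun x => (hmemσ x).trans (hmemτ x).symm)
    have hcoverτ : ∀ ω, ∃ r ∈ τl, ω ∈ A r :=
      fun ω => ⟨Φ ω, (hmemτ _).2 (hΦmem ω), (hatom _ _).2 rfl⟩
    have hEq : faInt γ (sf f) = chS γ A (v f) ∅ τl :=
      faInt_simple γ A hγ0 hγ1 hndτ hdescτ (fun r _ ω hω => hvatom f r ω hω) hcoverτ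
    rw [hEq]
    have hqpos : ∀ r ∈ τl, 0 ≤ gw γ A ∅ σl r :=
      fun r _ => gw_nonneg γ A hmono 𝒜.empty_mem hAσ r
    have H2 : γ (∅ ∪ preU A τl) - γ ∅ = 0 + (τl.map (gw γ A ∅ σl)).sum := by
      have h1 : preU A τl = preU A σl :=
        preU_congr A (fun r => ((hmemτ r).trans (hmemσ r).symm))
      have h2 : (τl.map (gw γ A ∅ σl)).sum = (σl.map (gw γ A ∅ σl)).sum :=
        ((hpermστ.symm).map _).sum_eq
      rw [h1, h2, gw_total γ A hndσ]
      ring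
    have H1 : ∀ n, γ (∅ ∪ preU A (τl.take n)) - γ ∅
        ≤ 0 + ((τl.take n).map (gw γ A ∅ σl)).sum := by
      intro n
      have hgc := gw_core γ A hmono hconvex (fun r => decide (r ∈ τl.take n))
        𝒜.empty_mem hAσ hndσ hdisjσ
      have hmm : ∀ x, x ∈ σl.filter (fun r => decide (r ∈ τl.take n)) ↔ x ∈ τl.take n := by
        intro x
        rw [List.mem_filter]
        simp only [decide_eq_true_eq]
        constructor
        · exact fun h => h.2
        · intro h
          exact ⟨(hmemσ x).2 ((hmemτ x).1 (List.take_subset n τl h)), h⟩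
      have hnd2 : (τl.take n).Nodup := (List.take_sublist n τl).nodup hndτ
      have hperm : (σl.filter (fun r => decide (r ∈ τl.take n))).Perm (τl.take n) :=
        (List.perm_ext_iff_of_nodup (hndσ.filter _) hnd2).2 hmm
      have h1 : preU A (τl.take n) = preU A (σl.filter (fun r => decide (r ∈ τl.take n))) :=
        preU_congr A (fun r => (hmm r).symm)
      have h2 : ((τl.take n).map (gw γ A ∅ σl)).sum
          = ((σl.filter (fun r => decide (r ∈ τl.take n))).map (gw γ A ∅ σl)).sum :=
        ((hperm.symm).map _).sum_eq
      rw [h1, h2]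
      linarith [hgc]
    have habel := chS_abel γ A (v := v f) (gw γ A ∅ σl) 0 (cB f + ε) le_rfl
      (fun r hr => hboundv f r ((hmemτ r).1 hr)) hdescτ hqpos H1 H2
    have hfin2 : (τl.map (fun r => gw γ A ∅ σl r * v f r)).sum = chS γ A (v f) ∅ σl := by
      rw [chS_eq_sum γ A hndσ]
      exact (hpermστ.symm.map _).sum_eq
    rw [← hfin2]
    linarith [habel]
  -- main chain
  rw [← Finset.sum_attach S (fun f => η f * faInt γ (fun ω => u (f ω))),
      ← Finset.sum_attach S (fun f => θ f * faInt γ (fun ω => u (f ω)))]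
  have hmain1 : ∀ f : {x // x ∈ S},
      faInt γ (fun ω => u (f.1 ω)) ≤ chS γ A (v f) ∅ σl := by
    intro f
    refine le_trans ?_ (hsimη f)
    exact faInt_mono hγ0 hγ1 hmono (hcB f) (hsfb f) (hmeasS f) (hsfm f)
      (fun ω => hsfge f ω)
  have hmain2 : ∀ f : {x // x ∈ S},
      chS γ A (v f) ∅ σl ≤ faInt γ (fun ω => u (f.1 ω)) + ε ∨ θ f.1 = 0 := by
    intro f
    by_cases hf : f.1 ∈ θ.support
    · left
      have h1 : faInt γ (fun ω => sf f ω - ε) ≤ faInt γ (fun ω => u (f.1 ω)) := by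
        refine faInt_mono hγ0 hγ1 hmono (c := cB f + 2*ε) ?_ (hcB f)
          (AMeasurable_sub_const (hsfm f) ε) (hmeasS f) ?_
        · intro ω
          have := hsfb f ω
          rw [abs_le] at this ⊢
          constructor <;> [linarith [this.1, hε]; linarith [this.2, hε]]
        · intro ω
          have := hsfle f ω
          show sf f ω - ε ≤ u (f.1 ω)
          linarith
      rw [hsimθ' f hf, hchshift f] at h1
      linarith
    · right
      exact Finsupp.notMem_support_iff.1 hf
  calc ∑ f ∈ S.attach, η f.1 * faInt γ (fun ω => u (f.1 ω))
      ≤ ∑ f ∈ S.attach, η f.1 * chS γ A (v f) ∅ σl := by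
        refine Finset.sum_le_sum fun f _ => ?_
        exact mul_le_mul_of_nonneg_left (hmain1 f) (hη0 f.1)
    _ = chS γ A (fun r => ∑ f ∈ S.attach, η f.1 * v f r) ∅ σl :=
        (chS_finset_sum γ A _ _ _ _ _).symm
    _ ≤ chS γ A (fun r => (∑ f ∈ S.attach, θ f.1 * v f r) + ε) ∅ σl := by
        refine chS_mono γ A hmono 𝒜.empty_mem hAσ ?_
        intro r hr
        obtain ⟨ω, rfl⟩ := hfin.mem_toFinset.1 ((hmemσ r).1 hr)
        have e1 : ∀ g : {x // x ∈ S}, v g (Φ ω) = sf g ω := fun g =>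
          (hvap g (Φ ω)).trans (hΦap ω g)
        calc ∑ f ∈ S.attach, η f.1 * v f (Φ ω)
            ≤ ∑ f ∈ S.attach, η f.1 * (u (f.1 ω) + ε) := by
              refine Finset.sum_le_sum fun f _ => ?_
              rw [e1 f]
              exact mul_le_mul_of_nonneg_left (hsfle f ω) (hη0 f.1)
          _ = (∑ f ∈ S.attach, η f.1 * u (f.1 ω)) + (∑ f ∈ S.attach, η f.1) * ε := by
              rw [Finset.sum_mul]
              rw [← Finset.sum_add_distrib]
              congr 1; funext f; ring
          _ ≤ (∑ f ∈ S.attach, θ f.1 * u (f.1 ω)) + 1 * ε := by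
              have d1 := hdom' ω
              rw [← Finset.sum_attach S (fun f => η f * u (f ω)),
                ← Finset.sum_attach S (fun f => θ f * u (f ω))] at d1
              have d2 : (∑ f ∈ S.attach, η f.1) ≤ 1 := by
                rw [Finset.sum_attach S (fun f => η f)]; exact hηm'
              have := mul_le_mul_of_nonneg_right d2 hε.le
              linarith
          _ ≤ (∑ f ∈ S.attach, θ f.1 * v f (Φ ω)) + ε := by
              have hterm : ∀ f : {x // x ∈ S}, θ f.1 * u (f.1 ω) ≤ θ f.1 * v f (Φ ω) := by
                intro f
                rw [e1 f]
                exact mul_le_mul_of_nonneg_left (hsfge f ω) (hθ0 f.1)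
              have hsum := Finset.sum_le_sum (s := S.attach) (fun f _ => hterm f)
              linarith
    _ = chS γ A (fun r => ∑ f ∈ S.attach, θ f.1 * v f r) ∅ σl + ε := by
        have h1 : (fun r => (∑ f ∈ S.attach, θ f.1 * v f r) + ε)
            = fun r => ε * (fun _ => (1:ℝ)) r + ∑ f ∈ S.attach, θ f.1 * v f r := by
          funext r; ring
        rw [h1, chS_smul_add, hchone]
        ring
    _ = (∑ f ∈ S.attach, θ f.1 * chS γ A (v f) ∅ σl) + ε := by
        rw [chS_finset_sum]
    _ ≤ (∑ f ∈ S.attach, θ f.1 * (faInt γ (fun ω => u (f.1 ω)) + ε)) + ε := by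
        refine add_le_add (Finset.sum_le_sum fun f _ => ?_) (le_refl ε)
        rcases hmain2 f with h | h
        · exact mul_le_mul_of_nonneg_left h (hθ0 f.1)
        · rw [h]; simp
    _ ≤ (∑ f ∈ S.attach, θ f.1 * faInt γ (fun ω => u (f.1 ω))) + δ := by
        have h1 : ∑ f ∈ S.attach, θ f.1 * (faInt γ (fun ω => u (f.1 ω)) + ε)
            = (∑ f ∈ S.attach, θ f.1 * faInt γ (fun ω => u (f.1 ω)))
              + (∑ f ∈ S.attach, θ f.1) * ε := by
          rw [Finset.sum_mul, ← Finset.sum_add_distrib]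
          congr 1; funext f; ring
        have h2 : (∑ f ∈ S.attach, θ f.1) ≤ 1 := by
          rw [Finset.sum_attach S (fun f => θ f)]; exact hθm'
        have h3 := mul_le_mul_of_nonneg_right h2 hε.le
        rw [h1]
        linarith
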